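/- Let Φ be a trace-preserving positive linear map on operators of a finite-dimensional Hilbert space 𝔥, and suppose Φ does not admit two nonzero invariant subspaces S₁, S₂ with S₁ ∩ S₂ = {0}. Then Φ has a unique invariant density operator. -/

import Mathlib

open Matrix ComplexOrder

/-- `S` is an invariant subspace (enclosure) for `Φ`: every positive semidefinite
operator supported in `S` is mapped to an operator supported in `S`. -/
def IsEnclosure {d : ℕ} (Φ : Matrix (Fin d) (Fin d) ℂ →ₗ[ℂ] Matrix (Fin d) (Fin d) ℂ)
    (S : Submodule ℂ (Fin d → ℂ)) : Prop :=
  ∀ ρ : Matrix (Fin d) (Fin d) ℂ, ρ.PosSemidef →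
    LinearMap.range ρ.mulVecLin ≤ S → LinearMap.range (Φ ρ).mulVecLin ≤ S

variable {d : ℕ}

namespace Stmt15Aux


noncomputable def sm {H : Matrix (Fin d) (Fin d) ℂ} (hH : H.IsHermitian) (f : Fin d → ℝ) :
    Matrix (Fin d) (Fin d) ℂ :=
  (hH.eigenvectorUnitary : Matrix (Fin d) (Fin d) ℂ) * diagonal (fun i => (f i : ℂ)) *
    (star (hH.eigenvectorUnitary : Matrix (Fin d) (Fin d) ℂ))

variable {H : Matrix (Fin d) (Fin d) ℂ} (hH : H.IsHermitian)

lemma sm_mul (f g : Fin d → ℝ) : sm hH f * sm hH g = sm hH (f * g) := by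
  unfold sm
  have h1 : (star (hH.eigenvectorUnitary : Matrix (Fin d) (Fin d) ℂ)) *
      (hH.eigenvectorUnitary : Matrix (Fin d) (Fin d) ℂ) = 1 :=
    Unitary.coe_star_mul_self _
  calc (↑hH.eigenvectorUnitary * diagonal (fun i => (f i : ℂ)) * star ↑hH.eigenvectorUnitary) *
      (↑hH.eigenvectorUnitary * diagonal (fun i => (g i : ℂ)) * star ↑hH.eigenvectorUnitary)
      = ↑hH.eigenvectorUnitary * (diagonal (fun i => (f i : ℂ)) *
        ((star ↑hH.eigenvectorUnitary * ↑hH.eigenvectorUnitary) * diagonal (fun i => (g i : ℂ)))) *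
        star ↑hH.eigenvectorUnitary := by
        simp only [Matrix.mul_assoc]
    _ = _ := by
        rw [h1, Matrix.one_mul, diagonal_mul_diagonal]
        congr 2
        ext i
        simp [Pi.mul_apply]

lemma sm_conjTranspose (f : Fin d → ℝ) : (sm hH f)ᴴ = sm hH f := by
  unfold sm
  simp only [conjTranspose_mul, conjTranspose_conjTranspose, star_eq_conjTranspose,
    diagonal_conjTranspose]
  rw [Matrix.mul_assoc]
  congr 2
  ext i j
  simp only [diagonal, of_apply, Pi.star_apply]
  split <;> simp

lemma sm_isHermitian (f : Fin d → ℝ) : (sm hH f).IsHermitian := sm_conjTranspose hH f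

lemma sm_posSemidef {f : Fin d → ℝ} (hf : ∀ i, 0 ≤ f i) : (sm hH f).PosSemidef := by
  unfold sm
  refine (Matrix.posSemidef_diagonal_iff.mpr fun i => ?_).mul_mul_conjTranspose_same _
  have := hf i
  positivity

lemma sm_trace (f : Fin d → ℝ) : (sm hH f).trace = ∑ i, (f i : ℂ) := by
  unfold sm
  rw [Matrix.trace_mul_cycle, Unitary.coe_star_mul_self, Matrix.one_mul,
    Matrix.trace_diagonal]

lemma sm_sub (f g : Fin d → ℝ) : sm hH f - sm hH g = sm hH (f - g) := by
  unfold sm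
  rw [← Matrix.sub_mul, ← Matrix.mul_sub, diagonal_sub]
  congr 2
  ext i
  simp

lemma sm_eigen : sm hH hH.eigenvalues = H := by
  rw [sm]
  exact (hH.spectral_theorem).symm



open scoped MatrixOrder in
lemma psd_eq_ct_mul_self {A : Matrix (Fin d) (Fin d) ℂ} (hA : A.PosSemidef) :
    ∃ B : Matrix (Fin d) (Fin d) ℂ, A = Bᴴ * B := by
  obtain ⟨B, hB⟩ := CStarAlgebra.nonneg_iff_eq_star_mul_self.mp hA.nonneg
  exact ⟨B, hB⟩

lemma trace_nonneg' {A : Matrix (Fin d) (Fin d) ℂ} (hA : A.PosSemidef) : 0 ≤ A.trace := by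
  rw [Matrix.trace]
  refine Finset.sum_nonneg fun i _ => ?_
  have := hA.dotProduct_mulVec_nonneg (Pi.single i 1)
  simpa [dotProduct, Pi.single_apply, Matrix.mulVec_single] using this

lemma trace_real {A : Matrix (Fin d) (Fin d) ℂ} (hA : A.PosSemidef) :
    A.trace = ((A.trace.re : ℝ) : ℂ) := by
  have h := trace_nonneg' hA
  rw [Complex.le_def] at h
  exact Complex.ext (by simp) (by simpa using h.2.symm)

lemma eq_zero_of_trace_eq_zero {A : Matrix (Fin d) (Fin d) ℂ} (hA : A.PosSemidef)
    (h : A.trace = 0) : A = 0 := by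
  obtain ⟨B, rfl⟩ := psd_eq_ct_mul_self hA
  rw [conjTranspose_mul_self_eq_zero (A := B)]
  -- trace (Bᴴ * B) = ∑ i, star (col i) ⬝ᵥ col i
  have htr : (Bᴴ * B).trace = ∑ i, dotProduct (star fun j => B j i) (fun j => B j i) := by
    rw [Matrix.trace]
    refine Finset.sum_congr rfl fun i _ => ?_
    simp [Matrix.diag, Matrix.mul_apply, dotProduct, Matrix.conjTranspose_apply]
  rw [htr] at h
  have hz : ∀ i ∈ Finset.univ, dotProduct (star fun j => B j i) (fun j => B j i) = 0 := by
    refine (Finset.sum_eq_zero_iff_of_nonneg fun i _ => ?_).mp h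
    exact dotProduct_star_self_nonneg _
  ext i j
  have := dotProduct_star_self_eq_zero.mp (hz j (Finset.mem_univ j))
  exact congrFun this i

lemma trace_mul_nonneg {A B : Matrix (Fin d) (Fin d) ℂ} (hA : A.PosSemidef)
    (hB : B.PosSemidef) : 0 ≤ (A * B).trace := by
  obtain ⟨C, rfl⟩ := psd_eq_ct_mul_self hA
  rw [← Matrix.trace_mul_cycle C B Cᴴ]
  exact trace_nonneg' (hB.mul_mul_conjTranspose_same C)

lemma mul_eq_zero_of_trace_mul_eq_zero {A B : Matrix (Fin d) (Fin d) ℂ} (hA : A.PosSemidef)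
    (hB : B.PosSemidef) (h : (A * B).trace = 0) : A * B = 0 := by
  obtain ⟨C, rfl⟩ := psd_eq_ct_mul_self hA
  obtain ⟨D, rfl⟩ := psd_eq_ct_mul_self hB
  have h2 : ((C * Dᴴ)ᴴ * (C * Dᴴ)).trace = 0 := by
    rw [conjTranspose_mul, conjTranspose_conjTranspose]
    calc (D * Cᴴ * (C * Dᴴ)).trace = (Cᴴ * (C * Dᴴ) * D).trace := by
          rw [Matrix.trace_mul_cycle D Cᴴ (C * Dᴴ)]
          exact Matrix.trace_mul_cycle (C * Dᴴ) D Cᴴ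
      _ = (Cᴴ * C * (Dᴴ * D)).trace := by rw [Matrix.mul_assoc, Matrix.mul_assoc, Matrix.mul_assoc]
      _ = 0 := h
  have h3 : C * Dᴴ = 0 := by
    have := eq_zero_of_trace_eq_zero (Matrix.posSemidef_conjTranspose_mul_self (C * Dᴴ)) h2
    exact conjTranspose_mul_self_eq_zero.mp this
  calc Cᴴ * C * (Dᴴ * D) = Cᴴ * (C * Dᴴ) * D := by
        rw [Matrix.mul_assoc, Matrix.mul_assoc, Matrix.mul_assoc]
    _ = 0 := by rw [h3, Matrix.mul_zero, Matrix.zero_mul]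

/-- quadratic form bounded by trace : `x⋆ A x ≤ tr A · x⋆x`. -/
lemma conj_mul_self' (z : ℂ) : (starRingEnd ℂ) z * z = ((‖z‖ ^ 2 : ℝ) : ℂ) := by
  rw [mul_comm, Complex.mul_conj]
  norm_cast
  exact (Complex.sq_norm z).symm

lemma quad_le_trace {A : Matrix (Fin d) (Fin d) ℂ} (hA : A.PosSemidef) (x : Fin d → ℂ) :
    dotProduct (star x) (A *ᵥ x) ≤ A.trace * dotProduct (star x) x := by
  obtain ⟨B, rfl⟩ := psd_eq_ct_mul_self hA
  have hL : dotProduct (star x) ((Bᴴ * B) *ᵥ x) = dotProduct (star (B *ᵥ x)) (B *ᵥ x) := by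
    rw [← Matrix.mulVec_mulVec, Matrix.dotProduct_mulVec, Matrix.vecMul_conjTranspose, star_star]
  rw [hL]
  have e1 : dotProduct (star (B *ᵥ x)) (B *ᵥ x) = ((∑ i, ‖((B *ᵥ x) i)‖ ^ 2 : ℝ) : ℂ) := by
    push_cast
    simp only [dotProduct, Pi.star_apply, Complex.star_def]
    exact Finset.sum_congr rfl fun i _ => by rw [conj_mul_self']; push_cast; ring
  have e2 : dotProduct (star x) x = ((∑ j, ‖(x j)‖ ^ 2 : ℝ) : ℂ) := by
    push_cast
    simp only [dotProduct, Pi.star_apply, Complex.star_def]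
    exact Finset.sum_congr rfl fun i _ => by rw [conj_mul_self']; push_cast; ring
  have e3 : (Bᴴ * B).trace = ((∑ i, ∑ j, ‖(B j i)‖ ^ 2 : ℝ) : ℂ) := by
    push_cast
    rw [Matrix.trace]
    refine Finset.sum_congr rfl fun i _ => ?_
    simp only [Matrix.diag, Matrix.mul_apply, Matrix.conjTranspose_apply, Complex.star_def]
    exact Finset.sum_congr rfl fun j _ => by rw [conj_mul_self']; push_cast; ring
  rw [e1, e2, e3, ← Complex.ofReal_mul, Complex.real_le_real]
  have key : ∀ i, ‖((B *ᵥ x) i)‖ ^ 2 ≤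
      (∑ j, ‖(B i j)‖ ^ 2) * ∑ j, ‖(x j)‖ ^ 2 := by
    intro i
    have h1 : ‖((B *ᵥ x) i)‖ ≤ ∑ j, ‖(B i j)‖ * ‖(x j)‖ := by
      simpa [Matrix.mulVec, dotProduct, _root_.map_mul] using
        (norm_sum_le (E := ℂ) Finset.univ fun j => B i j * x j)
    calc ‖((B *ᵥ x) i)‖ ^ 2 ≤ (∑ j, ‖(B i j)‖ * ‖(x j)‖) ^ 2 := by
          apply pow_le_pow_left₀ (norm_nonneg _) h1 2
      _ ≤ (∑ j, ‖(B i j)‖ ^ 2) * ∑ j, ‖(x j)‖ ^ 2 :=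
          Finset.sum_mul_sq_le_sq_mul_sq _ _ _
  calc ∑ i, ‖((B *ᵥ x) i)‖ ^ 2
      ≤ ∑ i, (∑ j, ‖(B i j)‖ ^ 2) * ∑ j, ‖(x j)‖ ^ 2 :=
        Finset.sum_le_sum fun i _ => key i
    _ = (∑ i, ∑ j, ‖(B i j)‖ ^ 2) * ∑ j, ‖(x j)‖ ^ 2 := by
        rw [Finset.sum_mul]
    _ = (∑ i, ∑ j, ‖(B j i)‖ ^ 2) * ∑ j, ‖(x j)‖ ^ 2 := by
        rw [Finset.sum_comm]



lemma matrix_eq_of_mulVec_eq {A B : Matrix (Fin d) (Fin d) ℂ}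
    (h : ∀ x, A *ᵥ x = B *ᵥ x) : A = B := by
  ext i j
  have := congrFun (h (Pi.single j 1)) i
  simpa [Matrix.mulVec_single] using this

lemma range_mul_le (A B : Matrix (Fin d) (Fin d) ℂ) :
    LinearMap.range (A * B).mulVecLin ≤ LinearMap.range A.mulVecLin := by
  rw [Matrix.mulVecLin_mul]
  exact LinearMap.range_comp_le_range _ _

lemma absorb_left {Q ρ : Matrix (Fin d) (Fin d) ℂ} (hQ : Q * Q = Q)
    (h : LinearMap.range ρ.mulVecLin ≤ LinearMap.range Q.mulVecLin) : Q * ρ = ρ := by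
  apply matrix_eq_of_mulVec_eq
  intro x
  obtain ⟨y, hy⟩ := h (LinearMap.mem_range_self ρ.mulVecLin x)
  have hy' : Q *ᵥ y = ρ *ᵥ x := hy
  rw [← Matrix.mulVec_mulVec, ← hy', Matrix.mulVec_mulVec, hQ, hy']

lemma eq_zero_of_range_eq_bot {A : Matrix (Fin d) (Fin d) ℂ}
    (h : LinearMap.range A.mulVecLin = ⊥) : A = 0 := by
  apply matrix_eq_of_mulVec_eq
  intro x
  have : A.mulVecLin x ∈ (⊥ : Submodule ℂ (Fin d → ℂ)) := h ▸ LinearMap.mem_range_self _ x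
  simpa using this

lemma herm_right_absorb {ρ Q : Matrix (Fin d) (Fin d) ℂ} (hρ : ρ.IsHermitian)
    (hQ : Q.IsHermitian) (h : Q * ρ = ρ) : ρ * Q = ρ := by
  have h2 := congrArg Matrix.conjTranspose h
  rwa [Matrix.conjTranspose_mul, hρ.eq, hQ.eq] at h2

/-- Loewner order implies range inclusion for PSD matrices. -/
lemma range_le_of_le {A B : Matrix (Fin d) (Fin d) ℂ} (hA : A.PosSemidef) (hB : B.PosSemidef)
    (hAB : (B - A).PosSemidef) : LinearMap.range A.mulVecLin ≤ LinearMap.range B.mulVecLin := by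
  classical
  have key : ∀ x, B *ᵥ x = 0 → A *ᵥ x = 0 := by
    intro x hx
    have h1 : 0 ≤ star x ⬝ᵥ (B - A) *ᵥ x := hAB.dotProduct_mulVec_nonneg x
    rw [Matrix.sub_mulVec, dotProduct_sub, hx, dotProduct_zero] at h1
    have h2 : 0 ≤ star x ⬝ᵥ A *ᵥ x := hA.dotProduct_mulVec_nonneg x
    have h1' : star x ⬝ᵥ A *ᵥ x ≤ 0 := by simpa using h1
    exact hA.dotProduct_mulVec_zero_iff x |>.mp (le_antisymm h1' h2)
  have hBQ : B * sm hB.1 (fun i => if hB.1.eigenvalues i ≠ 0 then 1 else 0) = B := by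
    have harg : (hB.1.eigenvalues * fun i => if hB.1.eigenvalues i ≠ 0 then (1:ℝ) else 0) =
        hB.1.eigenvalues := by
      funext i
      simp only [Pi.mul_apply]
      by_cases h : hB.1.eigenvalues i = 0 <;> simp [h]
    have h0 : sm hB.1 hB.1.eigenvalues *
        sm hB.1 (fun i => if hB.1.eigenvalues i ≠ 0 then 1 else 0) = sm hB.1 hB.1.eigenvalues := by
      rw [sm_mul, harg]
    rwa [sm_eigen hB.1] at h0
  have hQg : sm hB.1 (fun i => if hB.1.eigenvalues i ≠ 0 then 1 else 0) =
      B * sm hB.1 (fun i => if hB.1.eigenvalues i ≠ 0 then (hB.1.eigenvalues i)⁻¹ else 0) := by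
    have harg : (hB.1.eigenvalues * fun i => if hB.1.eigenvalues i ≠ 0 then (hB.1.eigenvalues i)⁻¹ else 0) =
        (fun i => if hB.1.eigenvalues i ≠ 0 then (1:ℝ) else 0) := by
      funext i
      simp only [Pi.mul_apply]
      by_cases h : hB.1.eigenvalues i = 0 <;> simp [h]
    have h0 : sm hB.1 hB.1.eigenvalues *
        sm hB.1 (fun i => if hB.1.eigenvalues i ≠ 0 then (hB.1.eigenvalues i)⁻¹ else 0) =
        sm hB.1 (fun i => if hB.1.eigenvalues i ≠ 0 then 1 else 0) := by
      rw [sm_mul, harg]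
    rw [sm_eigen hB.1] at h0
    exact h0.symm
  set χ : Fin d → ℝ := fun i => if hB.1.eigenvalues i ≠ 0 then 1 else 0 with hχ
  set g : Fin d → ℝ := fun i => if hB.1.eigenvalues i ≠ 0 then (hB.1.eigenvalues i)⁻¹ else 0 with hg
  have hAQ : A * (1 - sm hB.1 χ) = 0 := by
    apply matrix_eq_of_mulVec_eq
    intro v
    rw [← Matrix.mulVec_mulVec, Matrix.zero_mulVec]
    apply key
    rw [Matrix.mulVec_mulVec, Matrix.mul_sub, Matrix.mul_one, hBQ, sub_self, Matrix.zero_mulVec]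
  rw [Matrix.mul_sub, Matrix.mul_one] at hAQ
  have hAQ' : A = A * sm hB.1 χ := sub_eq_zero.mp hAQ
  have hQA : sm hB.1 χ * A = A := by
    have h2 := congrArg Matrix.conjTranspose hAQ'.symm
    rwa [Matrix.conjTranspose_mul, hA.1.eq, (sm_isHermitian hB.1 χ).eq] at h2
  calc LinearMap.range A.mulVecLin = LinearMap.range (sm hB.1 χ * A).mulVecLin := by rw [hQA]
    _ ≤ LinearMap.range (sm hB.1 χ).mulVecLin := range_mul_le _ _
    _ = LinearMap.range (B * sm hB.1 g).mulVecLin := by rw [← hQg]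
    _ ≤ LinearMap.range B.mulVecLin := range_mul_le _ _



variable {H : Matrix (Fin d) (Fin d) ℂ} (hH : H.IsHermitian)

lemma sm_zero : sm hH (0 : Fin d → ℝ) = 0 := by
  unfold sm
  simp

lemma sm_one : sm hH (fun _ => (1:ℝ)) = 1 := by
  unfold sm
  have : (Matrix.diagonal (fun i : Fin d => ((1:ℝ) : ℂ))) = 1 := by simp
  rw [this, Matrix.mul_one]
  exact Matrix.mem_unitaryGroup_iff.mp hH.eigenvectorUnitary.2

lemma sm_smul (c : ℝ) (f : Fin d → ℝ) : sm hH (c • f) = (c : ℂ) • sm hH f := by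
  unfold sm
  have hdiag : (Matrix.diagonal fun i => (((c • f) i : ℝ) : ℂ)) =
      (c : ℂ) • Matrix.diagonal fun i => ((f i : ℝ) : ℂ) := by
    rw [← Matrix.diagonal_smul]
    exact congrArg Matrix.diagonal (funext fun i => by
      simp only [Pi.smul_apply, smul_eq_mul]
      push_cast
      ring)
  rw [hdiag, Matrix.mul_smul, Matrix.smul_mul]

lemma sm_neg (f : Fin d → ℝ) : sm hH (-f) = - sm hH f := by
  have h := sm_smul hH (-1) f
  simpa using h

lemma smul_posSemidef {c : ℝ} (hc : 0 ≤ c) {A : Matrix (Fin d) (Fin d) ℂ}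
    (hA : A.PosSemidef) : ((c : ℂ) • A).PosSemidef := by
  refine Matrix.PosSemidef.of_dotProduct_mulVec_nonneg ?_ ?_
  · show ((c:ℂ) • A)ᴴ = (c:ℂ) • A
    rw [Matrix.conjTranspose_smul, Complex.star_def, Complex.conj_ofReal, hA.1.eq]
  · intro x
    rw [Matrix.smul_mulVec, dotProduct_smul, smul_eq_mul]
    exact mul_nonneg (by positivity) (hA.dotProduct_mulVec_nonneg x)

lemma dot_herm_left {Q : Matrix (Fin d) (Fin d) ℂ} (hQ : Q.IsHermitian) (v w : Fin d → ℂ) :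
    star v ⬝ᵥ Q *ᵥ w = star (Q *ᵥ v) ⬝ᵥ w := by
  rw [Matrix.dotProduct_mulVec]
  congr 1
  rw [← hQ.eq, Matrix.vecMul_conjTranspose, star_star, hQ.eq]

/-- The core trace argument: if `Φ` fixes `H = P - N` with `Q` absorbing `P` and killing `N`,
then `Φ P` stays in the range of `Q`. -/
lemma core_gen (Φ : Matrix (Fin d) (Fin d) ℂ →ₗ[ℂ] Matrix (Fin d) (Fin d) ℂ)
    (hΦtr : ∀ ρ, (Φ ρ).trace = ρ.trace)
    (hΦpos : ∀ ρ, ρ.PosSemidef → (Φ ρ).PosSemidef)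
    {G P N Q : Matrix (Fin d) (Fin d) ℂ} (hfix : Φ G = G) (hG : G = P - N)
    (hP : P.PosSemidef) (hN : N.PosSemidef) (hQ : Q.PosSemidef) (hQ1 : (1 - Q).PosSemidef)
    (hQP : Q * P = P) (hQN : Q * N = 0) : Φ P = Q * Φ P := by
  have hΦG : Φ G = Φ P - Φ N := by rw [hG, map_sub]
  have htr1 : (Q * Φ G).trace = P.trace := by
    rw [hfix, hG, Matrix.mul_sub, Matrix.trace_sub, hQP, hQN, Matrix.trace_zero, sub_zero]
  have htr2 : (Q * Φ G).trace = (Q * Φ P).trace - (Q * Φ N).trace := by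
    rw [hΦG, Matrix.mul_sub, Matrix.trace_sub]
  have ha : ((1 - Q) * Φ P).trace = (Φ P).trace - (Q * Φ P).trace := by
    rw [Matrix.sub_mul, Matrix.one_mul, Matrix.trace_sub]
  have hb0 : 0 ≤ ((1 - Q) * Φ P).trace := trace_mul_nonneg hQ1 (hΦpos P hP)
  have hc0 : 0 ≤ (Q * Φ N).trace := trace_mul_nonneg hQ (hΦpos N hN)
  have hPtr : (Φ P).trace = P.trace := hΦtr P
  have hsum : ((1 - Q) * Φ P).trace + (Q * Φ N).trace = 0 := by
    have : P.trace = ((Φ P).trace - ((1 - Q) * Φ P).trace) - (Q * Φ N).trace := by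
      rw [← htr1, htr2]
      congr 1
      rw [ha]
      ring
    rw [hPtr] at this
    linear_combination this
  have hae : ((1 - Q) * Φ P).trace = 0 := by
    have h1 : ((1 - Q) * Φ P).trace ≤ 0 := by
      have := hc0
      calc ((1 - Q) * Φ P).trace = -(Q * Φ N).trace := by linear_combination hsum
        _ ≤ 0 := by simpa using this
    exact le_antisymm h1 hb0
  have hz : (1 - Q) * Φ P = 0 := mul_eq_zero_of_trace_mul_eq_zero hQ1 (hΦpos P hP) hae
  rw [Matrix.sub_mul, Matrix.one_mul] at hz
  exact sub_eq_zero.mp hz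

lemma mem_range_absorb {f : Fin d → ℝ} {x : Fin d → ℂ}
    (hx : x ∈ LinearMap.range (sm hH f).mulVecLin) :
    sm hH (fun i => if f i ≠ 0 then 1 else 0) *ᵥ x = x := by
  obtain ⟨y, hy⟩ := hx
  have hy' : (sm hH f) *ᵥ y = x := hy
  have harg : (fun i => if f i ≠ 0 then (1:ℝ) else 0) * f = f := by
    funext i
    simp only [Pi.mul_apply]
    by_cases h : f i = 0 <;> simp [h]
  have hQf : sm hH (fun i => if f i ≠ 0 then (1:ℝ) else 0) * sm hH f = sm hH f := by
    rw [sm_mul, harg]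
  rw [← hy', Matrix.mulVec_mulVec, hQf]

lemma disjoint_sm {f g : Fin d → ℝ} (hfg : ∀ i, f i = 0 ∨ g i = 0) :
    LinearMap.range (sm hH f).mulVecLin ⊓ LinearMap.range (sm hH g).mulVecLin = ⊥ := by
  rw [Submodule.eq_bot_iff]
  rintro x ⟨hxf, hxg⟩
  have h1 := mem_range_absorb hH hxf
  have h2 := mem_range_absorb hH hxg
  have hprod : sm hH (fun i => if f i ≠ 0 then (1:ℝ) else 0) *
      sm hH (fun i => if g i ≠ 0 then (1:ℝ) else 0) = 0 := by
    rw [sm_mul]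
    have : (fun i => if f i ≠ 0 then (1:ℝ) else 0) * (fun i => if g i ≠ 0 then (1:ℝ) else 0) = 0 := by
      funext i
      rcases hfg i with h | h <;> simp [h]
    rw [this, sm_zero]
  calc x = sm hH (fun i => if f i ≠ 0 then (1:ℝ) else 0) *ᵥ
        (sm hH (fun i => if g i ≠ 0 then (1:ℝ) else 0) *ᵥ x) := by rw [h2, h1]
    _ = 0 := by rw [Matrix.mulVec_mulVec, hprod, Matrix.zero_mulVec]



lemma range_smul_le (c : ℂ) (A : Matrix (Fin d) (Fin d) ℂ) :
    LinearMap.range (c • A).mulVecLin ≤ LinearMap.range A.mulVecLin := by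
  rintro x ⟨y, rfl⟩
  exact ⟨c • y, by
    show A *ᵥ (c • y) = (c • A) *ᵥ y
    rw [Matrix.mulVec_smul, Matrix.smul_mulVec]⟩

lemma enclosure_main (Φ : Matrix (Fin d) (Fin d) ℂ →ₗ[ℂ] Matrix (Fin d) (Fin d) ℂ)
    (hΦtr : ∀ ρ, (Φ ρ).trace = ρ.trace)
    (hΦpos : ∀ ρ, ρ.PosSemidef → (Φ ρ).PosSemidef)
    {H : Matrix (Fin d) (Fin d) ℂ} (hH : H.IsHermitian)
    (f : Fin d → ℝ) (hfix : Φ (sm hH f) = sm hH f) :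
    IsEnclosure Φ (LinearMap.range (sm hH (fun i => max (f i) 0)).mulVecLin) := by
  classical
  set pf : Fin d → ℝ := fun i => max (f i) 0 with hpf
  set nf : Fin d → ℝ := fun i => max (-f i) 0 with hnf
  set χ : Fin d → ℝ := fun i => if 0 < f i then 1 else 0 with hχ
  set g : Fin d → ℝ := fun i => if 0 < f i then (f i)⁻¹ else 0 with hg
  have id1 : χ * pf = pf := by
    funext i
    rw [hχ, hpf]
    simp only [Pi.mul_apply]
    by_cases h : 0 < f i
    · simp [h]
    · simp [h, max_eq_right (le_of_not_gt h)]
  have id2 : χ * nf = 0 := by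
    funext i
    rw [hχ, hnf]
    simp only [Pi.mul_apply, Pi.zero_apply]
    by_cases h : 0 < f i
    · simp [h, max_eq_right (neg_nonpos.mpr h.le)]
    · simp [h]
  have id3 : pf - nf = f := by
    funext i
    rw [hpf, hnf]
    simp only [Pi.sub_apply]
    rcases le_total (f i) 0 with h | h
    · rw [max_eq_right h, max_eq_left (neg_nonneg.mpr h)]
      ring
    · rw [max_eq_left h, max_eq_right (neg_nonpos.mpr h)]
      ring
  have id4 : χ * χ = χ := by
    funext i
    rw [hχ]
    simp only [Pi.mul_apply]
    by_cases h : 0 < f i <;> simp [h]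
  have id5 : pf * g = χ := by
    funext i
    rw [hpf, hg, hχ]
    simp only [Pi.mul_apply]
    by_cases h : 0 < f i
    · rw [if_pos h, if_pos h, max_eq_left h.le, mul_inv_cancel₀ h.ne']
    · rw [if_neg h, if_neg h, max_eq_right (le_of_not_gt h), zero_mul]
  have hPpsd : (sm hH pf).PosSemidef := sm_posSemidef hH fun i => le_max_right _ _
  have hNpsd : (sm hH nf).PosSemidef := sm_posSemidef hH fun i => le_max_right _ _
  have hQpsd : (sm hH χ).PosSemidef := sm_posSemidef hH fun i => by
    rw [hχ]; by_cases h : 0 < f i <;> simp [h]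
  have hQ1psd : (1 - sm hH χ).PosSemidef := by
    rw [← sm_one hH, sm_sub]
    refine sm_posSemidef hH fun i => ?_
    simp only [Pi.sub_apply]
    rw [hχ]
    by_cases h : 0 < f i <;> simp [h]
  have hQP : sm hH χ * sm hH pf = sm hH pf := by rw [sm_mul, id1]
  have hQN : sm hH χ * sm hH nf = 0 := by rw [sm_mul, id2, sm_zero]
  have hQQ : sm hH χ * sm hH χ = sm hH χ := by rw [sm_mul, id4]
  have hPN : sm hH f = sm hH pf - sm hH nf := by rw [sm_sub, id3]
  have core : Φ (sm hH pf) = sm hH χ * Φ (sm hH pf) :=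
    core_gen Φ hΦtr hΦpos hfix hPN hPpsd hNpsd hQpsd hQ1psd hQP hQN
  have hQgP : sm hH χ = sm hH pf * sm hH g := by rw [sm_mul, id5]
  have hrangeQP : LinearMap.range (sm hH χ).mulVecLin ≤
      LinearMap.range (sm hH pf).mulVecLin := by
    rw [hQgP]
    exact range_mul_le _ _
  have hrangePQ : LinearMap.range (sm hH pf).mulVecLin ≤
      LinearMap.range (sm hH χ).mulVecLin := by
    conv_lhs => rw [← hQP]
    exact range_mul_le _ _
  intro ρ hρ hρle
  have hρQ : sm hH χ * ρ = ρ := absorb_left hQQ (le_trans hρle hrangePQ)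
  have hρQ' : ρ * sm hH χ = ρ := herm_right_absorb hρ.1 (sm_isHermitian hH χ) hρQ
  obtain ⟨c, hc0, hcpsd⟩ : ∃ c : ℝ, 0 ≤ c ∧ ((c:ℂ) • sm hH pf - ρ).PosSemidef := by
    by_cases hex : ∃ i, 0 < f i
    · set T := Finset.univ.filter (fun i : Fin d => 0 < f i) with hT
      have hTne : T.Nonempty := by
        obtain ⟨i, hi⟩ := hex
        exact ⟨i, by simp [hT, hi]⟩
      set lam := T.inf' hTne f with hlam
      have hlampos : 0 < lam :=
        (Finset.lt_inf'_iff hTne).mpr fun i hi => (Finset.mem_filter.mp hi).2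
      set t := ρ.trace.re with ht
      have ht0 : 0 ≤ t := by
        have h := trace_nonneg' hρ
        rw [Complex.le_def] at h
        simpa [ht] using h.1
      have htr : ρ.trace = (t:ℂ) := trace_real hρ
      refine ⟨t / lam, div_nonneg ht0 hlampos.le, ?_⟩
      have hclam : ((t / lam : ℝ):ℂ) * (lam:ℂ) = (t:ℂ) := by
        push_cast
        field_simp
      have hc0' : (0:ℂ) ≤ ((t / lam : ℝ):ℂ) := by
        have := Complex.real_le_real.mpr (div_nonneg ht0 hlampos.le)
        simpa using this
      refine Matrix.PosSemidef.of_dotProduct_mulVec_nonneg ?_ ?_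
      · show ((( t / lam : ℝ):ℂ) • sm hH pf - ρ)ᴴ = _
        rw [Matrix.conjTranspose_sub, Matrix.conjTranspose_smul, Complex.star_def,
          Complex.conj_ofReal, (sm_isHermitian hH pf).eq, hρ.1.eq]
      · intro v
        have hrv : star v ⬝ᵥ ρ *ᵥ v = star (sm hH χ *ᵥ v) ⬝ᵥ ρ *ᵥ (sm hH χ *ᵥ v) := by
          conv_lhs => rw [show ρ = sm hH χ * (ρ * sm hH χ) from by rw [hρQ', hρQ]]
          rw [← Matrix.mulVec_mulVec, dot_herm_left (sm_isHermitian hH χ),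
            ← Matrix.mulVec_mulVec]
        have hq : star (sm hH χ *ᵥ v) ⬝ᵥ (sm hH χ *ᵥ v) = star v ⬝ᵥ sm hH χ *ᵥ v := by
          rw [← dot_herm_left (sm_isHermitian hH χ), Matrix.mulVec_mulVec, hQQ]
        have htq := quad_le_trace hρ (sm hH χ *ᵥ v)
        have hlamq : (lam:ℂ) * (star v ⬝ᵥ sm hH χ *ᵥ v) ≤ star v ⬝ᵥ sm hH pf *ᵥ v := by
          have hfn : ∀ i, 0 ≤ (pf - lam • χ) i := by
            intro i
            have hrepr : (pf - lam • χ) i = (max (f i) 0) - lam * (if 0 < f i then 1 else 0) := by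
              simp [hpf, hχ]
            rw [hrepr]
            by_cases h : 0 < f i
            · rw [if_pos h, max_eq_left h.le, mul_one, sub_nonneg]
              exact Finset.inf'_le f (by simp [hT, h])
            · rw [if_neg h, mul_zero, sub_zero]
              exact le_max_right _ _
          have hpsd := sm_posSemidef hH hfn
          have h0 := hpsd.dotProduct_mulVec_nonneg v
          rw [← sm_sub, sm_smul] at h0
          rw [Matrix.sub_mulVec, dotProduct_sub, Matrix.smul_mulVec,
            dotProduct_smul, smul_eq_mul] at h0
          exact sub_nonneg.mp h0
        have hgoal : star v ⬝ᵥ ρ *ᵥ v ≤ ((t / lam : ℝ):ℂ) * (star v ⬝ᵥ sm hH pf *ᵥ v) := by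
          rw [hrv]
          calc star (sm hH χ *ᵥ v) ⬝ᵥ ρ *ᵥ (sm hH χ *ᵥ v)
              ≤ ρ.trace * (star (sm hH χ *ᵥ v) ⬝ᵥ (sm hH χ *ᵥ v)) := htq
            _ = (t:ℂ) * (star v ⬝ᵥ sm hH χ *ᵥ v) := by rw [htr, hq]
            _ = ((t / lam : ℝ):ℂ) * ((lam:ℂ) * (star v ⬝ᵥ sm hH χ *ᵥ v)) := by
                rw [← mul_assoc, hclam]
            _ ≤ ((t / lam : ℝ):ℂ) * (star v ⬝ᵥ sm hH pf *ᵥ v) :=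
                mul_le_mul_of_nonneg_left hlamq hc0'
        rw [Matrix.sub_mulVec, dotProduct_sub, Matrix.smul_mulVec,
          dotProduct_smul, smul_eq_mul]
        exact sub_nonneg.mpr hgoal
    · have hχ0 : χ = 0 := by
        funext i
        rw [hχ]
        simp only [Pi.zero_apply]
        rw [if_neg fun h => hex ⟨i, h⟩]
      have hρ0 : ρ = 0 := by
        rw [hχ0, sm_zero, Matrix.zero_mul] at hρQ
        exact hρQ.symm
      refine ⟨0, le_refl _, ?_⟩
      rw [hρ0]
      simpa using Matrix.PosSemidef.zero
  have hsubpsd : ((c:ℂ) • Φ (sm hH pf) - Φ ρ).PosSemidef := by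
    have := hΦpos _ hcpsd
    rwa [map_sub, _root_.map_smul] at this
  have hr1 : LinearMap.range (Φ ρ).mulVecLin ≤
      LinearMap.range ((c:ℂ) • Φ (sm hH pf)).mulVecLin :=
    range_le_of_le (hΦpos ρ hρ) (smul_posSemidef hc0 (hΦpos _ hPpsd)) hsubpsd
  have hr2 := range_smul_le (c:ℂ) (Φ (sm hH pf))
  have hr3 : LinearMap.range (Φ (sm hH pf)).mulVecLin ≤
      LinearMap.range (sm hH χ).mulVecLin := by
    conv_lhs => rw [core]
    exact range_mul_le _ _
  exact le_trans hr1 (le_trans hr2 (le_trans hr3 hrangeQP))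



lemma herm_decomp {B : Matrix (Fin d) (Fin d) ℂ} (hB : B.IsHermitian) :
    B = sm hB (fun i => max (hB.eigenvalues i) 0) - sm hB (fun i => max (-hB.eigenvalues i) 0) := by
  rw [sm_sub]
  have harg : (fun i => max (hB.eigenvalues i) 0) - (fun i => max (-hB.eigenvalues i) 0) =
      hB.eigenvalues := by
    funext i
    simp only [Pi.sub_apply]
    rcases le_total (hB.eigenvalues i) 0 with h | h
    · rw [max_eq_right h, max_eq_left (neg_nonneg.mpr h)]
      ring
    · rw [max_eq_left h, max_eq_right (neg_nonpos.mpr h)]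
      ring
  rw [harg, sm_eigen]

lemma phi_herm (Φ : Matrix (Fin d) (Fin d) ℂ →ₗ[ℂ] Matrix (Fin d) (Fin d) ℂ)
    (hΦpos : ∀ ρ, ρ.PosSemidef → (Φ ρ).PosSemidef)
    {B : Matrix (Fin d) (Fin d) ℂ} (hB : B.IsHermitian) : (Φ B).IsHermitian := by
  have h := herm_decomp hB
  rw [h, map_sub]
  exact ((hΦpos _ (sm_posSemidef hB fun i => le_max_right _ _)).1).sub
    ((hΦpos _ (sm_posSemidef hB fun i => le_max_right _ _)).1)

lemma phi_conjT_aux (Φ : Matrix (Fin d) (Fin d) ℂ →ₗ[ℂ] Matrix (Fin d) (Fin d) ℂ)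
    {H₁ H₂ A : Matrix (Fin d) (Fin d) ℂ} (h1 : (Φ H₁).IsHermitian) (h2 : (Φ H₂).IsHermitian)
    (hA1 : A = H₁ + Complex.I • H₂) (hA2 : Aᴴ = H₁ - Complex.I • H₂) : Φ Aᴴ = (Φ A)ᴴ := by
  rw [hA2, map_sub, _root_.map_smul, hA1, map_add, _root_.map_smul, Matrix.conjTranspose_add,
    Matrix.conjTranspose_smul, h1.eq, h2.eq, Complex.star_def, Complex.conj_I, neg_smul,
    ← sub_eq_add_neg]

lemma phi_conjT (Φ : Matrix (Fin d) (Fin d) ℂ →ₗ[ℂ] Matrix (Fin d) (Fin d) ℂ)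
    (hΦpos : ∀ ρ, ρ.PosSemidef → (Φ ρ).PosSemidef)
    (A : Matrix (Fin d) (Fin d) ℂ) : Φ Aᴴ = (Φ A)ᴴ := by
  set c1 : ℂ := ((1/2 : ℝ) : ℂ) with hc1
  have hstarc1 : star c1 = c1 := by rw [hc1, Complex.star_def, Complex.conj_ofReal]
  set H₁ := c1 • (A + Aᴴ) with hH₁
  set H₂ := (-(Complex.I) * c1) • (A - Aᴴ) with hH₂
  have h1 : H₁.IsHermitian := by
    show H₁ᴴ = H₁
    rw [hH₁, Matrix.conjTranspose_smul, Matrix.conjTranspose_add,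
      Matrix.conjTranspose_conjTranspose, hstarc1, add_comm]
  have h2 : H₂.IsHermitian := by
    show H₂ᴴ = H₂
    rw [hH₂, Matrix.conjTranspose_smul, Matrix.conjTranspose_sub,
      Matrix.conjTranspose_conjTranspose]
    have hs : star (-(Complex.I) * c1) = Complex.I * c1 := by
      rw [star_mul', hstarc1, star_neg, Complex.star_def, Complex.conj_I, neg_neg]
    rw [hs, show (Aᴴ - A) = -(A - Aᴴ) from (neg_sub _ _).symm, smul_neg, ← neg_smul, neg_mul]
  have hIc : Complex.I * (-(Complex.I) * c1) = c1 := by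
    rw [← mul_assoc, mul_neg, Complex.I_mul_I, neg_neg, one_mul]
  have hA1 : A = H₁ + Complex.I • H₂ := by
    rw [hH₁, hH₂, smul_smul, hIc, ← smul_add]
    have habel : (A + Aᴴ) + (A - Aᴴ) = (2:ℂ) • A := by
      rw [two_smul]
      abel
    rw [habel, smul_smul]
    have : c1 * 2 = 1 := by
      rw [hc1]
      norm_num
    rw [this, one_smul]
  have hA2 : Aᴴ = H₁ - Complex.I • H₂ := by
    rw [hH₁, hH₂, smul_smul, hIc, ← smul_sub]
    have habel : (A + Aᴴ) - (A - Aᴴ) = (2:ℂ) • Aᴴ := by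
      rw [two_smul]
      abel
    rw [habel, smul_smul]
    have : c1 * 2 = 1 := by
      rw [hc1]
      norm_num
    rw [this, one_smul]
  clear_value c1
  exact phi_conjT_aux Φ (phi_herm Φ hΦpos h1) (phi_herm Φ hΦpos h2) hA1 hA2


end Stmt15Aux

open Stmt15Aux in
theorem stmt_15 {d : ℕ} (hd : 0 < d) (Φ : Matrix (Fin d) (Fin d) ℂ →ₗ[ℂ] Matrix (Fin d) (Fin d) ℂ)
    (hΦtr : ∀ ρ, (Φ ρ).trace = ρ.trace)
    (hΦpos : ∀ ρ, ρ.PosSemidef → (Φ ρ).PosSemidef)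
    (hni : ¬ ∃ S₁ S₂ : Submodule ℂ (Fin d → ℂ),
        S₁ ≠ ⊥ ∧ S₂ ≠ ⊥ ∧ S₁ ⊓ S₂ = ⊥ ∧ IsEnclosure Φ S₁ ∧ IsEnclosure Φ S₂) :
    ∃! ρ : Matrix (Fin d) (Fin d) ℂ, ρ.PosSemidef ∧ ρ.trace = 1 ∧ Φ ρ = ρ := by
  classical
  -- dichotomy: any Hermitian fixed point has vanishing positive or negative part
  have key : ∀ (G : Matrix (Fin d) (Fin d) ℂ) (hG : G.IsHermitian), Φ G = G →
      sm hG (fun i => max (hG.eigenvalues i) 0) = 0 ∨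
      sm hG (fun i => max (-hG.eigenvalues i) 0) = 0 := by
    intro G hG hfix
    by_contra hcon
    push_neg at hcon
    obtain ⟨hP0, hN0⟩ := hcon
    apply hni
    refine ⟨LinearMap.range (sm hG (fun i => max (hG.eigenvalues i) 0)).mulVecLin,
      LinearMap.range (sm hG (fun i => max (-hG.eigenvalues i) 0)).mulVecLin,
      ?_, ?_, ?_, ?_, ?_⟩
    · intro hbot
      exact hP0 (eq_zero_of_range_eq_bot hbot)
    · intro hbot
      exact hN0 (eq_zero_of_range_eq_bot hbot)
    · refine disjoint_sm hG fun i => ?_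
      rcases le_total (hG.eigenvalues i) 0 with h | h
      · exact Or.inl (max_eq_right h)
      · exact Or.inr (max_eq_right (neg_nonpos.mpr h))
    · exact enclosure_main Φ hΦtr hΦpos hG hG.eigenvalues (by rw [sm_eigen]; exact hfix)
    · have hne : (fun i => -hG.eigenvalues i) = -hG.eigenvalues := rfl
      have hfix2 : Φ (sm hG (fun i => -hG.eigenvalues i)) = sm hG (fun i => -hG.eigenvalues i) := by
        rw [hne, sm_neg, map_neg, sm_eigen, hfix]
      exact enclosure_main Φ hΦtr hΦpos hG (fun i => -hG.eigenvalues i) hfix2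
  -- extract a positive semidefinite fixed point from a nonzero Hermitian one
  have extract : ∀ (G : Matrix (Fin d) (Fin d) ℂ), G.IsHermitian → Φ G = G → G ≠ 0 →
      ∃ Pm : Matrix (Fin d) (Fin d) ℂ, Pm.PosSemidef ∧ Φ Pm = Pm ∧ Pm ≠ 0 ∧
        (Pm = G ∨ Pm = -G) := by
    intro G hG hfix hne
    have hdec := herm_decomp hG
    rcases key G hG hfix with h0 | h0
    · refine ⟨-G, ?_, by rw [map_neg, hfix], by simpa using hne, Or.inr rfl⟩
      have : -G = sm hG (fun i => max (-hG.eigenvalues i) 0) := by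
        conv_lhs => rw [hdec]
        rw [h0, zero_sub, neg_neg]
      rw [this]
      exact sm_posSemidef hG fun i => le_max_right _ _
    · refine ⟨G, ?_, hfix, hne, Or.inl rfl⟩
      have : G = sm hG (fun i => max (hG.eigenvalues i) 0) := by
        conv_lhs => rw [hdec]
        rw [h0, sub_zero]
      rw [this]
      exact sm_posSemidef hG fun i => le_max_right _ _
  -- existence of a nonzero fixed point
  set L : Matrix (Fin d) (Fin d) ℂ →ₗ[ℂ] Matrix (Fin d) (Fin d) ℂ := Φ - LinearMap.id with hL
  have hnotinj : ¬ Function.Injective L := by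
    intro hinj
    have hsurj : Function.Surjective L :=
      (LinearMap.injective_iff_surjective (f := L)).mp hinj
    obtain ⟨X, hX⟩ := hsurj (1 : Matrix (Fin d) (Fin d) ℂ)
    have h1 : (L X).trace = (1 : Matrix (Fin d) (Fin d) ℂ).trace := by rw [hX]
    rw [hL, LinearMap.sub_apply, LinearMap.id_apply, Matrix.trace_sub, hΦtr, sub_self,
      Matrix.trace_one] at h1
    have : (Fintype.card (Fin d) : ℂ) ≠ 0 := by
      simp only [Fintype.card_fin]
      exact_mod_cast hd.ne'
    exact this h1.symm
  obtain ⟨a, b, hab, hne⟩ := Function.not_injective_iff.mp hnotinj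
  have hXfix : Φ (a - b) = a - b := by
    have h0 : L (a - b) = 0 := by
      rw [map_sub, hab, sub_self]
    rw [hL, LinearMap.sub_apply, LinearMap.id_apply, sub_eq_zero] at h0
    exact h0
  set X := a - b with hXdef
  have hX0 : X ≠ 0 := sub_ne_zero.mpr hne
  have hXHfix : Φ Xᴴ = Xᴴ := by rw [phi_conjT Φ hΦpos X, hXfix]
  -- a nonzero Hermitian fixed point
  obtain ⟨G, hGh, hGfix, hG0⟩ :
      ∃ G : Matrix (Fin d) (Fin d) ℂ, G.IsHermitian ∧ Φ G = G ∧ G ≠ 0 := by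
    by_cases h : X + Xᴴ = 0
    · refine ⟨Complex.I • (Xᴴ - X), ?_, ?_, ?_⟩
      · show (Complex.I • (Xᴴ - X))ᴴ = _
        rw [Matrix.conjTranspose_smul, Matrix.conjTranspose_sub,
          Matrix.conjTranspose_conjTranspose, Complex.star_def, Complex.conj_I, neg_smul,
          ← smul_neg, neg_sub]
      · rw [_root_.map_smul, map_sub, hXHfix, hXfix]
      · have hXH : Xᴴ = -X := by
          rw [← sub_eq_zero]
          rw [sub_neg_eq_add, add_comm]
          exact h
        rw [hXH]
        intro hcon
        apply hX0
        have h2 : Complex.I • ((-2 : ℂ) • X) = 0 := by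
          rw [show (-2 : ℂ) • X = -X - X from by rw [neg_smul, two_smul, neg_add]; abel]
          exact hcon
        rw [smul_smul] at h2
        have : (Complex.I * (-2 : ℂ)) ≠ 0 := by
          simp [Complex.I_ne_zero]
        exact (smul_eq_zero.mp h2).elim (fun hc => absurd hc this) id
    · refine ⟨X + Xᴴ, ?_, ?_, h⟩
      · show (X + Xᴴ)ᴴ = _
        rw [Matrix.conjTranspose_add, Matrix.conjTranspose_conjTranspose, add_comm]
      · rw [map_add, hXfix, hXHfix]
  -- turn it into a fixed density matrix
  obtain ⟨Pm, hPmpsd, hPmfix, hPm0, _⟩ := extract G hGh hGfix hG0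
  set t := Pm.trace.re with htdef
  have htr : Pm.trace = ((t : ℝ) : ℂ) := trace_real hPmpsd
  have htr0 : Pm.trace ≠ 0 := fun h => hPm0 (eq_zero_of_trace_eq_zero hPmpsd h)
  have htre0 : t ≠ 0 := by
    intro h
    apply htr0
    rw [htr, h, Complex.ofReal_zero]
  have htrpos : 0 ≤ t := by
    have h := trace_nonneg' hPmpsd
    rw [Complex.le_def] at h
    simpa [htdef] using h.1
  set ρ₀ := ((t⁻¹ : ℝ) : ℂ) • Pm with hρ₀
  have hρ₀psd : ρ₀.PosSemidef := smul_posSemidef (inv_nonneg.mpr htrpos) hPmpsd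
  have hρ₀tr : ρ₀.trace = 1 := by
    rw [hρ₀, Matrix.trace_smul, smul_eq_mul, htr, ← Complex.ofReal_mul,
      inv_mul_cancel₀ htre0, Complex.ofReal_one]
  have hρ₀fix : Φ ρ₀ = ρ₀ := by rw [hρ₀, _root_.map_smul, hPmfix]
  refine ⟨ρ₀, ⟨hρ₀psd, hρ₀tr, hρ₀fix⟩, ?_⟩
  rintro y ⟨hypsd, hytr, hyfix⟩
  by_contra hyne
  have hGdh : (y - ρ₀).IsHermitian := hypsd.1.sub hρ₀psd.1
  have hGdfix : Φ (y - ρ₀) = y - ρ₀ := by rw [map_sub, hyfix, hρ₀fix]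
  have hGd0 : y - ρ₀ ≠ 0 := sub_ne_zero.mpr hyne
  obtain ⟨Pm', hPm'psd, _, hPm'0, hPm'eq⟩ := extract _ hGdh hGdfix hGd0
  have htrd : (y - ρ₀).trace = 0 := by
    rw [Matrix.trace_sub, hytr, hρ₀tr, sub_self]
  rcases hPm'eq with rfl | h
  · exact hPm'0 (eq_zero_of_trace_eq_zero hPm'psd htrd)
  · apply hPm'0
    apply eq_zero_of_trace_eq_zero hPm'psd
    rw [h, Matrix.trace_neg, htrd, neg_zero]
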